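/- Let σ² > 0, B > 0, g̃ > 0, λ > 0, T > 0, μ ≥ 0, p_c ≥ 0, and ω, θ be reals with ω − θ ≤ λ·σ²·ln 2/(B·g̃). Define β(x) = σ²·(2^{x/B} − 1) and F(t, ℓ) = (ω − θ)·ℓ − (λ·t/g̃)·β(ℓ/t) − μ·t − λ·p_c·t. Then F(t, ℓ) ≤ 0 for every t ∈ (0, T] and every ℓ ≥ 0; i.e., the value 0, attained at t = 0, ℓ = 0 (with the convention that the objective is 0 there), is optimal and no offloading is performed. -/

import Mathlib

/-- If `ω − θ ≤ λ·σ²·ln 2/(B·g̃)`, then the per-user Lagrangian offloading objective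
`F(t, ℓ) = (ω − θ)·ℓ − (λ·t/g̃)·β(ℓ/t) − μ·t − λ·p_c·t`, with
`β(x) = σ²·(2^{x/B} − 1)`, is nonpositive for every `t ∈ (0, T]` and `ℓ ≥ 0`. -/
theorem offloading_no_offload_optimal
    (σ2 B g lam T μ pc ω θ : ℝ)
    (hσ2 : 0 < σ2) (hB : 0 < B) (hg : 0 < g) (hlam : 0 < lam) (hT : 0 < T)
    (hμ : 0 ≤ μ) (hpc : 0 ≤ pc)
    (hcond : ω - θ ≤ lam * σ2 * Real.log 2 / (B * g)) :
    ∀ t ∈ Set.Ioc (0 : ℝ) T, ∀ ℓ : ℝ, 0 ≤ ℓ →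
      (ω - θ) * ℓ - (lam * t / g) * (σ2 * ((2 : ℝ) ^ (ℓ / t / B) - 1)) - μ * t -
        lam * pc * t ≤ 0 := by
  intro t ht ℓ hℓ
  obtain ⟨ht0, htT⟩ := ht
  set x : ℝ := ℓ / t / B with hx
  have hx0 : 0 ≤ x := by positivity
  -- 2^x - 1 ≥ x * log 2
  have hexp : x * Real.log 2 + 1 ≤ (2 : ℝ) ^ x := by
    have := Real.add_one_le_exp (x * Real.log 2)
    calc x * Real.log 2 + 1 ≤ Real.exp (x * Real.log 2) := this
      _ = (2 : ℝ) ^ x := by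
          rw [Real.rpow_def_of_pos (by norm_num : (0:ℝ) < 2)]
          ring_nf
  have hkey : (ω - θ) * ℓ ≤ (lam * t / g) * (σ2 * ((2 : ℝ) ^ x - 1)) := by
    have h1 : (ω - θ) * ℓ ≤ lam * σ2 * Real.log 2 / (B * g) * ℓ :=
      mul_le_mul_of_nonneg_right hcond hℓ
    have h2 : lam * σ2 * Real.log 2 / (B * g) * ℓ
        = (lam * t / g) * (σ2 * (x * Real.log 2)) := by
      field_simp [hx]
      rw [hx]; field_simp
    have h3 : (lam * t / g) * (σ2 * (x * Real.log 2))
        ≤ (lam * t / g) * (σ2 * ((2 : ℝ) ^ x - 1)) := by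
      have : x * Real.log 2 ≤ (2 : ℝ) ^ x - 1 := by linarith
      have hc : 0 ≤ lam * t / g := by positivity
      nlinarith [hσ2.le, mul_le_mul_of_nonneg_left this hσ2.le]
    linarith
  have h4 : 0 ≤ μ * t := by positivity
  have h5 : 0 ≤ lam * pc * t := by positivity
  linarith
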